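/- In the scale context, for every regular cardinal χ with κ < χ < λ, the set S^gd_χ = {δ < μ : δ ∈ S^gd and cf(δ) = χ} is stationary in μ. -/

import Mathlib

open Cardinal Set

noncomputable section

/-- The `β`-th iterated cardinal successor of `χ`. -/
noncomputable def succIter (χ : Cardinal.{0}) (β : Ordinal.{0}) : Cardinal :=
  Ordinal.limitRecOn β χ (fun _ ih => Order.succ ih)
    (fun β _ ih => ⨆ γ : Iio β, ih γ.1 γ.2)

/-- `J` is a proper ideal on `{i : i < κ}`. -/
structure IsIdealOn (κ : Ordinal.{0}) (J : Set (Set Ordinal)) : Prop where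
  subset_mem : ∀ s ∈ J, s ⊆ Iio κ
  empty_mem : ∅ ∈ J
  mono : ∀ s ∈ J, ∀ t ⊆ s, t ∈ J
  union_mem : ∀ s ∈ J, ∀ t ∈ J, s ∪ t ∈ J
  proper : Iio κ ∉ J

/-- The ideal of bounded subsets of `κ`. -/
def boundedIdeal (κ : Ordinal.{0}) : Set (Set Ordinal) := {s | ∃ j < κ, s ⊆ Iio j}

/-- `J` is `θ`-complete: closed under unions of fewer than `θ` of its members. -/
def IsCompleteIdeal (θ : Cardinal.{0}) (J : Set (Set Ordinal)) : Prop :=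
  ∀ S : Set (Set Ordinal), S ⊆ J → #S < Cardinal.lift.{1,0} θ → ⋃₀ S ∈ J

/-- `f <_J g` : `{i < κ : f i ≥ g i} ∈ J`. -/
def ltMod (κ : Ordinal.{0}) (J : Set (Set Ordinal)) (f g : Ordinal → Ordinal) : Prop :=
  {i | i < κ ∧ g i ≤ f i} ∈ J

/-- `h` is a `<_J`-exact upper bound of `⟨f α : α < δ⟩`. -/
def IsEub (κ : Ordinal.{0}) (J : Set (Set Ordinal)) (δ : Ordinal.{0})
    (f : Ordinal → Ordinal → Ordinal) (h : Ordinal → Ordinal) : Prop :=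
  (∀ α < δ, ltMod κ J (f α) h) ∧
    ∀ g : Ordinal → Ordinal, ltMod κ J g h → ∃ α < δ, ltMod κ J g (f α)

/-- `D` is an ultrafilter on `{i : i < κ}`. -/
structure IsUltrafilterOn (κ : Ordinal.{0}) (D : Set (Set Ordinal)) : Prop where
  subset_mem : ∀ s ∈ D, s ⊆ Iio κ
  inter_mem : ∀ s ∈ D, ∀ t ∈ D, s ∩ t ∈ D
  superset_mem : ∀ s ∈ D, ∀ t, t ⊆ Iio κ → s ⊆ t → t ∈ D
  empty_not_mem : ∅ ∉ D
  ultra : ∀ s, s ⊆ Iio κ → s ∈ D ∨ Iio κ \ s ∈ D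

/-- `f <_D g` : `{i < κ : f i < g i} ∈ D`. -/
def ltModD (κ : Ordinal.{0}) (D : Set (Set Ordinal)) (f g : Ordinal → Ordinal) : Prop :=
  {i | i < κ ∧ f i < g i} ∈ D

/-- `δ` is a good point for the sequence `f` (with respect to the ideal `J` on `κ`). -/
def IsGoodPt (κ : Ordinal.{0}) (J : Set (Set Ordinal)) (f : Ordinal → Ordinal → Ordinal)
    (δ : Ordinal.{0}) : Prop :=
  ∃ A : Set Ordinal, A ⊆ Iio δ ∧ (∀ β < δ, ∃ α ∈ A, β < α) ∧
    ∃ s : Ordinal → Set Ordinal, (∀ α ∈ A, s α ∈ J) ∧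
      ∀ i < κ, ∀ α ∈ A, ∀ β ∈ A, α < β → i ∉ s α → i ∉ s β → f α i < f β i

/-- `δ` is a weakly good point for `f`. -/
def IsWeaklyGoodPt (κ : Ordinal.{0}) (J : Set (Set Ordinal)) (f : Ordinal → Ordinal → Ordinal)
    (δ : Ordinal.{0}) : Prop :=
  ∃ t : Set Ordinal, t ⊆ Iio κ ∧ t ∉ J ∧
    ∃ A : Set Ordinal, A ⊆ Iio δ ∧ (∀ β < δ, ∃ α ∈ A, β < α) ∧
      ∃ s : Ordinal → Set Ordinal, (∀ α ∈ A, s α ∈ J) ∧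
        ∀ i ∈ t, ∀ α ∈ A, ∀ β ∈ A, α < β → i ∉ s α → i ∉ s β → f α i < f β i

/-- `δ` is a chaotic point for `f`. -/
def IsChaoticPt (κ : Ordinal.{0}) (J : Set (Set Ordinal)) (f : Ordinal → Ordinal → Ordinal)
    (δ : Ordinal.{0}) : Prop :=
  (∃ D : Set (Set Ordinal), IsUltrafilterOn κ D ∧ (∀ s ∈ J, s ∉ D) ∧
    ∃ a : Ordinal → Set Ordinal, (∀ i < κ, #(a i) ≤ Cardinal.lift.{1,0} κ.card) ∧
      ∀ α < δ, ∃ β, α < β ∧ β < δ ∧ ∃ g : Ordinal → Ordinal,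
        (∀ i < κ, g i ∈ a i) ∧ ltModD κ D (f α) g ∧ ltModD κ D g (f β)) ∨
  (∃ A : Set Ordinal, A ⊆ Iio δ ∧ (∀ β < δ, ∃ α ∈ A, β < α) ∧
    ∃ g : Ordinal → Ordinal, ∀ α ∈ A, ∀ β ∈ A, α < β →
      {i | i < κ ∧ f β i ≤ g i} \ {i | i < κ ∧ f α i ≤ g i} ∈ J ∧
      {i | i < κ ∧ f α i ≤ g i} \ {i | i < κ ∧ f β i ≤ g i} ∉ J)

/-- The set of good points `δ < λ⁺` with `κ < cf δ < λ`. -/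
def Sgd (κ lam : Cardinal.{0}) (J : Set (Set Ordinal)) (f : Ordinal → Ordinal → Ordinal) :
    Set Ordinal :=
  {δ | δ < (Order.succ lam).ord ∧ Order.IsSuccLimit δ ∧ κ < δ.cof ∧ δ.cof < lam ∧ IsGoodPt κ.ord J f δ}

/-- The set of bad points `δ < λ⁺` with `κ < cf δ < λ`. -/
def Sbd (κ lam : Cardinal.{0}) (J : Set (Set Ordinal)) (f : Ordinal → Ordinal → Ordinal) :
    Set Ordinal :=
  {δ | δ < (Order.succ lam).ord ∧ Order.IsSuccLimit δ ∧ κ < δ.cof ∧ δ.cof < lam ∧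
    (∃ h : Ordinal → Ordinal, IsEub κ.ord J δ f h ∧ {i | i < κ.ord ∧ (h i).cof ≤ κ} ∈ J) ∧
    ¬ IsGoodPt κ.ord J f δ}

/-- The set of chaotic points `δ < λ⁺` with `κ < cf δ < λ`. -/
def Sch (κ lam : Cardinal.{0}) (J : Set (Set Ordinal)) (f : Ordinal → Ordinal → Ordinal) :
    Set Ordinal :=
  {δ | δ < (Order.succ lam).ord ∧ Order.IsSuccLimit δ ∧ κ < δ.cof ∧ δ.cof < lam ∧ IsChaoticPt κ.ord J f δ}

/-- `C` is a club (closed unbounded) subset of `δ`. -/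
def IsClubIn (C : Set Ordinal) (δ : Ordinal.{0}) : Prop :=
  C ⊆ Iio δ ∧ (∀ α < δ, ∃ β ∈ C, α < β) ∧
    ∀ α < δ, 0 < α → (∀ β < α, ∃ γ ∈ C, β < γ ∧ γ < α) → α ∈ C

/-- `S` is stationary in `δ`. -/
def IsStationaryIn (S : Set Ordinal) (δ : Ordinal.{0}) : Prop :=
  ∀ C : Set Ordinal, IsClubIn C δ → (S ∩ C).Nonempty

/-- `(∏_{i<κ} θs i, <_J)` has true cofinality `σ`. -/
def HasTrueCofinality (κ : Ordinal.{0}) (J : Set (Set Ordinal)) (θs : Ordinal → Cardinal)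
    (σ : Cardinal.{0}) : Prop :=
  σ.IsRegular ∧ ∃ g : Ordinal → Ordinal → Ordinal,
    (∀ ξ < σ.ord, ∀ i < κ, g ξ i < (θs i).ord) ∧
    (∀ ξ < σ.ord, ∀ ξ' < σ.ord, ξ < ξ' → ltMod κ J (g ξ) (g ξ')) ∧
    ∀ h : Ordinal → Ordinal, (∀ i < κ, h i < (θs i).ord) → ∃ ξ < σ.ord, ltMod κ J h (g ξ)

/-- `S_{<θ}(X)` : the subsets of `X` of cardinality `< θ`. -/
def SetLt (θ : Cardinal.{0}) (X : Set Ordinal) : Set (Set Ordinal) :=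
  {a | a ⊆ X ∧ #a < Cardinal.lift.{1,0} θ}

/-- `C` is a club in `S_{<θ}(X)` : cofinal and closed under unions of increasing chains
of length `< θ`. -/
def IsClubInSetLt (θ : Cardinal.{0}) (X : Set Ordinal) (C : Set (Set Ordinal)) : Prop :=
  C ⊆ SetLt θ X ∧ (∀ a ∈ SetLt θ X, ∃ b ∈ C, a ⊆ b) ∧
    ∀ β : Ordinal, 0 < β → β < θ.ord → ∀ c : Ordinal → Set Ordinal,
      (∀ i < β, c i ∈ C) → (∀ i < β, ∀ j < β, i ≤ j → c i ⊆ c j) →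
      (⋃ i ∈ Iio β, c i) ∈ C

/-- `S` is stationary in `S_{<θ}(X)`. -/
def IsStationaryInSetLt (θ : Cardinal.{0}) (X : Set Ordinal) (S : Set (Set Ordinal)) : Prop :=
  ∀ C : Set (Set Ordinal), IsClubInSetLt θ X C → (S ∩ C).Nonempty

/-- `NPT(λ, θ)` : there is a family `⟨A i : i < λ⟩` of subsets of `λ`, each of cardinality
`≤ θ`, with no transversal, while every proper initial segment has a transversal. -/
def NPT (lam θ : Cardinal.{0}) : Prop :=
  ∃ A : Ordinal → Set Ordinal,
    (∀ i < lam.ord, A i ⊆ Iio lam.ord ∧ #(A i) ≤ Cardinal.lift.{1,0} θ) ∧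
    (¬ ∃ F : Ordinal → Ordinal, (∀ i < lam.ord, F i ∈ A i) ∧ InjOn F (Iio lam.ord)) ∧
    ∀ α < lam.ord, ∃ F : Ordinal → Ordinal, (∀ i < α, F i ∈ A i) ∧ InjOn F (Iio α)

end


/-- General recursion principle producing a function on ordinals whose value at each `ξ`
satisfies a predicate depending on the values at smaller ordinals. -/
theorem exists_rec_ord (Q : Ordinal.{0} → (Ordinal → Ordinal) → Ordinal → Prop)
    (hcongr : ∀ ξ g g', (∀ η, η < ξ → g η = g' η) → ∀ β, Q ξ g β → Q ξ g' β)
    (hex : ∀ ξ g, ∃ β, Q ξ g β) :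
    ∃ e : Ordinal → Ordinal, ∀ ξ, Q ξ e (e ξ) := by
  classical
  have wf : WellFounded ((· < ·) : Ordinal → Ordinal → Prop) := Ordinal.lt_wf
  let F : ∀ ξ : Ordinal, (∀ η, η < ξ → Ordinal) → Ordinal := fun ξ ih =>
    Classical.choose (hex ξ fun η => if h : η < ξ then ih η h else 0)
  refine ⟨wf.fix F, fun ξ => ?_⟩
  have hfix := wf.fix_eq F ξ
  have hs := Classical.choose_spec (hex ξ fun η => if h : η < ξ then wf.fix F η else 0)
  rw [hfix]
  exact hcongr ξ _ _ (fun η hη => by rw [dif_pos hη]) _ hs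

/-- Auxiliary "pointwise sup below `ξ`, ignoring coordinates below `i0`" function. -/
noncomputable def Hfun (i0 : Ordinal.{0}) (f : Ordinal → Ordinal → Ordinal)
    (ξ : Ordinal) (g : Ordinal → Ordinal) (i : Ordinal) : Ordinal :=
  if i0 ≤ i then Ordinal.bsup ξ (fun η _ => f (g η) i) else 0

theorem Hfun_congr (i0 : Ordinal.{0}) (f : Ordinal → Ordinal → Ordinal) (ξ : Ordinal)
    (g g' : Ordinal → Ordinal) (h : ∀ η, η < ξ → g η = g' η) :
    Hfun i0 f ξ g = Hfun i0 f ξ g' := by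
  funext i
  unfold Hfun
  congr 1
  exact congrArg _ (funext fun η => funext fun hη => by rw [h η hη])

theorem Hfun_le (i0 : Ordinal.{0}) (f : Ordinal → Ordinal → Ordinal) (ξ : Ordinal)
    (g : Ordinal → Ordinal) {η i : Ordinal} (hη : η < ξ) (hi : i0 ≤ i) :
    f (g η) i ≤ Hfun i0 f ξ g i := by
  unfold Hfun
  rw [if_pos hi]
  exact Ordinal.le_bsup _ η hη

/-- Claim 1.12: for every regular `χ` with `κ < χ < λ`, the set of good points of
cofinality `χ` is stationary in `μ = λ⁺`. -/
theorem statement12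
    (κ lam μ : Cardinal.{0}) (hκ : κ.IsRegular) (hκlam : κ < lam)
    (hcfl : lam.ord.cof = κ) (hμ : μ = Order.succ lam)
    (J : Set (Set Ordinal.{0})) (hJ : IsIdealOn κ.ord J) (hJbd : boundedIdeal κ.ord ⊆ J)
    (lamSeq : Ordinal.{0} → Cardinal.{0})
    (hreg : ∀ i < κ.ord, (lamSeq i).IsRegular)
    (hgtκ : ∀ i < κ.ord, Order.succ κ < lamSeq i)
    (hmono : ∀ i < κ.ord, ∀ j < κ.ord, i < j → lamSeq i < lamSeq j)
    (hbelow : ∀ i < κ.ord, lamSeq i < lam)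
    (hsupl : ∀ c < lam, ∃ i < κ.ord, c < lamSeq i)
    (f : Ordinal.{0} → Ordinal.{0} → Ordinal.{0})
    (hf : ∀ α < μ.ord, ∀ i < κ.ord, f α i < (lamSeq i).ord)
    (hinc : ∀ α < μ.ord, ∀ β < μ.ord, α < β → ltMod κ.ord J (f α) (f β))
    (hcofinal : ∀ g : Ordinal.{0} → Ordinal.{0}, (∀ i < κ.ord, g i < (lamSeq i).ord) →
      ∃ α < μ.ord, ltMod κ.ord J g (f α))
    (χ : Cardinal.{0}) (hχ : χ.IsRegular) (h1 : κ < χ) (h2 : χ < lam) :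
    IsStationaryIn {δ | δ ∈ Sgd κ lam J f ∧ δ.cof = χ} μ.ord := by
  classical
  intro C hC
  obtain ⟨hCsub, hCunb, hCcl⟩ := hC
  have hωκ : ℵ₀ ≤ κ := hκ.aleph0_le
  have hωlam : ℵ₀ ≤ lam := hωκ.trans hκlam.le
  have hμreg : μ.IsRegular := hμ ▸ Cardinal.isRegular_succ hωlam
  have hμcof : μ.ord.cof = μ := hμreg.cof_eq
  have hlamμ : lam < μ := hμ ▸ Order.lt_succ lam
  have hχμ : χ < μ := h2.trans hlamμ
  have hχlim : Order.IsSuccLimit χ.ord := Cardinal.isSuccLimit_ord hχ.aleph0_le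
  have hμord0 : (0 : Ordinal) < μ.ord := by
    rw [Cardinal.lt_ord, Ordinal.card_zero]
    exact Cardinal.aleph0_pos.trans_le hμreg.aleph0_le
  obtain ⟨i0, hi0κ, hi0χ⟩ := hsupl χ h2
  have hχi : ∀ i, i0 ≤ i → i < κ.ord → χ < lamSeq i := by
    intro i hle hi
    rcases hle.eq_or_lt with rfl | hlt
    · exact hi0χ
    · exact hi0χ.trans (hmono i0 hi0κ i hi hlt)
  -- the predicate used in the recursion
  set Q : Ordinal → (Ordinal → Ordinal) → Ordinal → Prop := fun ξ g β =>
    β < μ.ord ∧ (ξ < χ.ord → (∀ η < ξ, g η < μ.ord) →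
      ((∀ η < ξ, g η < β) ∧ (∃ γ, γ ∈ C ∧ (∀ η < ξ, g η < γ) ∧ γ ≤ β) ∧
        {i | i < κ.ord ∧ f β i ≤ Hfun i0 f ξ g i} ∈ J)) with hQdef
  have hcongr : ∀ ξ g g', (∀ η, η < ξ → g η = g' η) → ∀ β, Q ξ g β → Q ξ g' β := by
    intro ξ g g' hgg β hQ
    obtain ⟨hβ, hrest⟩ := hQ
    refine ⟨hβ, fun hξ hg' => ?_⟩
    have hg : ∀ η < ξ, g η < μ.ord := fun η hη => by rw [hgg η hη]; exact hg' η hη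
    obtain ⟨h1, h2, h3⟩ := hrest hξ hg
    refine ⟨fun η hη => by rw [← hgg η hη]; exact h1 η hη, ?_, ?_⟩
    · obtain ⟨γ, hγ1, hγ2, hγ3⟩ := h2
      exact ⟨γ, hγ1, fun η hη => by rw [← hgg η hη]; exact hγ2 η hη, hγ3⟩
    · rw [← Hfun_congr i0 f ξ g g' hgg]
      exact h3
  have hex : ∀ ξ g, ∃ β, Q ξ g β := by
    intro ξ g
    by_cases hc : ξ < χ.ord ∧ ∀ η < ξ, g η < μ.ord
    · obtain ⟨hξ, hg⟩ := hc
      have hξcard : ξ.card < χ := Cardinal.lt_ord.1 hξ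
      have hp : Ordinal.bsup ξ (fun η _ => g η) < μ.ord := by
        apply Ordinal.bsup_lt_ord
        · rw [hμcof]; exact hξcard.trans hχμ
        · exact fun η hη => hg η hη
      obtain ⟨γ, hγC, hγp⟩ := hCunb _ hp
      have hγμ : γ < μ.ord := hCsub hγC
      have hgγ : ∀ η < ξ, g η < γ := fun η hη =>
        lt_of_le_of_lt (Ordinal.le_bsup (fun η _ => g η) η hη) hγp
      have hHlt : ∀ i < κ.ord, Hfun i0 f ξ g i < (lamSeq i).ord := by
        intro i hi
        unfold Hfun
        split_ifs with h
        · apply Ordinal.bsup_lt_ord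
          · rw [(hreg i hi).cof_eq]
            exact hξcard.trans (hχi i h hi)
          · exact fun η hη => hf (g η) (hg η hη) i hi
        · rw [Cardinal.lt_ord, Ordinal.card_zero]
          exact (hreg i hi).pos
      obtain ⟨α0, hα0μ, hα0⟩ := hcofinal (Hfun i0 f ξ g) hHlt
      have hmaxμ : max γ α0 < μ.ord := max_lt hγμ hα0μ
      refine ⟨max γ α0, hmaxμ, fun _ _ => ⟨?_, ⟨γ, hγC, hgγ, le_max_left _ _⟩, ?_⟩⟩
      · exact fun η hη => (hgγ η hη).trans_le (le_max_left _ _)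
      · rcases (le_max_right γ α0).eq_or_lt with heq | hlt
        · rw [← heq]; exact hα0
        · have hT := hinc α0 hα0μ _ hmaxμ hlt
          apply hJ.mono _ (hJ.union_mem _ hα0 _ hT)
          intro i hi
          obtain ⟨hiκ, hile⟩ := hi
          by_cases h' : f α0 i ≤ Hfun i0 f ξ g i
          · exact Set.mem_union_left _ ⟨hiκ, h'⟩
          · exact Set.mem_union_right _ ⟨hiκ, hile.trans (not_le.1 h').le⟩
    · refine ⟨0, hμord0, fun h1 h2 => absurd ⟨h1, h2⟩ hc⟩
  obtain ⟨e, he⟩ := exists_rec_ord Q hcongr hex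
  have hbd : ∀ ξ, e ξ < μ.ord := fun ξ => (he ξ).1
  have hspec : ∀ ξ, ξ < χ.ord →
      (∀ η < ξ, e η < e ξ) ∧ (∃ γ, γ ∈ C ∧ (∀ η < ξ, e η < γ) ∧ γ ≤ e ξ) ∧
        {i | i < κ.ord ∧ f (e ξ) i ≤ Hfun i0 f ξ e i} ∈ J :=
    fun ξ hξ => (he ξ).2 hξ (fun η _ => hbd η)
  have hmonoe : ∀ η ξ, η < ξ → ξ < χ.ord → e η < e ξ :=
    fun η ξ h hξ => (hspec ξ hξ).1 η h
  set δ := Ordinal.blsub χ.ord (fun ξ _ => e ξ) with hδdef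
  have heδ : ∀ ξ, ξ < χ.ord → e ξ < δ := fun ξ hξ => Ordinal.lt_blsub _ ξ hξ
  have hδμ : δ < μ.ord := by
    apply Ordinal.blsub_lt_ord
    · rw [hμcof, Cardinal.card_ord]; exact hχμ
    · exact fun ξ _ => hbd ξ
  have hcofle : δ.cof ≤ χ := by
    have := Ordinal.cof_blsub_le (fun ξ (_ : ξ < χ.ord) => e ξ)
    rwa [Cardinal.card_ord] at this
  have hcofge : χ ≤ δ.cof := by
    rw [Ordinal.le_cof_iff_lsub]
    intro ι F hF
    by_contra hlt
    push_neg at hlt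
    have hG : ∀ i : ι, ∃ ξ, ∃ _ : ξ < χ.ord, F i ≤ e ξ := by
      intro i
      have : F i < δ := hF ▸ Ordinal.lt_lsub F i
      exact Ordinal.lt_blsub_iff.1 this
    choose G hGχ hGle using hG
    have hζχ : Ordinal.lsub G < χ.ord := by
      apply Ordinal.lsub_lt_ord _ hGχ
      rw [hχ.cof_eq]; exact hlt
    have h1 : e (Ordinal.lsub G) < δ := heδ _ hζχ
    rw [← hF] at h1
    obtain ⟨i, hi⟩ := Ordinal.lt_lsub_iff.1 h1
    exact absurd hi (not_le.2 ((hGle i).trans_lt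
      (hmonoe (G i) _ (Ordinal.lt_lsub G i) hζχ)))
  have hcofχ : δ.cof = χ := le_antisymm hcofle hcofge
  have hδlim : Order.IsSuccLimit δ := Ordinal.aleph0_le_cof.1 (by rw [hcofχ]; exact hχ.aleph0_le)
  have hunb : ∀ β, β < δ → ∃ ξ, ξ < χ.ord ∧ β < e ξ := by
    intro β hβ
    obtain ⟨ξ, hξ, hle⟩ := Ordinal.lt_blsub_iff.1 hβ
    exact ⟨Order.succ ξ, hχlim.succ_lt hξ,
      hle.trans_lt (hmonoe ξ _ (Order.lt_succ ξ) (hχlim.succ_lt hξ))⟩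
  have hδC : δ ∈ C := by
    apply hCcl δ hδμ hδlim.pos
    intro β hβ
    obtain ⟨ξ, hξ, hβξ⟩ := hunb β hβ
    have hξ1 : Order.succ ξ < χ.ord := hχlim.succ_lt hξ
    obtain ⟨γ, hγC, hγgt, hγle⟩ := (hspec _ hξ1).2.1
    exact ⟨γ, hγC, hβξ.trans (hγgt ξ (Order.lt_succ ξ)), hγle.trans_lt (heδ _ hξ1)⟩
  have einj : ∀ ξ, ξ < χ.ord → ∀ ξ', ξ' < χ.ord → e ξ = e ξ' → ξ = ξ' := by
    intro ξ hξ ξ' hξ' hE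
    by_contra hne
    rcases lt_or_gt_of_ne hne with h | h
    · exact absurd hE (ne_of_lt (hmonoe _ _ h hξ'))
    · exact absurd hE.symm (ne_of_lt (hmonoe _ _ h hξ))
  have hIioJ : Iio i0 ∈ J := hJbd ⟨i0, hi0κ, subset_rfl⟩
  -- the witness δ
  refine ⟨δ, ⟨⟨?_, hδlim, ?_, ?_, ?_⟩, hcofχ⟩, hδC⟩
  · rw [← hμ]; exact hδμ
  · rw [hcofχ]; exact h1
  · rw [hcofχ]; exact h2
  · -- goodness
    refine ⟨{x | ∃ ξ, ξ < χ.ord ∧ e ξ = x}, ?_, ?_,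
      fun x => if h : ∃ ξ, ξ < χ.ord ∧ e ξ = x then
        {i | i < κ.ord ∧ f x i ≤ Hfun i0 f (Classical.choose h) e i} ∪ Iio i0
      else ∅, ?_, ?_⟩
    · rintro x ⟨ξ, hξ, rfl⟩
      exact heδ ξ hξ
    · intro β hβ
      obtain ⟨ξ, hξ, hβξ⟩ := hunb β hβ
      exact ⟨e ξ, ⟨ξ, hξ, rfl⟩, hβξ⟩
    · rintro x ⟨ξ, hξ, rfl⟩
      have hP : ∃ ξ', ξ' < χ.ord ∧ e ξ' = e ξ := ⟨ξ, hξ, rfl⟩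
      beta_reduce
      rw [dif_pos hP]
      have hcs := Classical.choose_spec hP
      have hcc : Classical.choose hP = ξ := einj _ hcs.1 _ hξ hcs.2
      rw [hcc]
      exact hJ.union_mem _ (hspec ξ hξ).2.2 _ hIioJ
    · intro i hi α hα β hβ hαβ hsα hsβ
      obtain ⟨η, hη, rfl⟩ := hα
      obtain ⟨ξ, hξ, rfl⟩ := hβ
      have hηξ : η < ξ := by
        by_contra hle
        push_neg at hle
        rcases hle.eq_or_lt with rfl | hlt
        · exact lt_irrefl _ hαβ
        · exact absurd (hmonoe _ _ hlt hη) (not_lt.2 hαβ.le)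
      have hP : ∃ ξ', ξ' < χ.ord ∧ e ξ' = e ξ := ⟨ξ, hξ, rfl⟩
      beta_reduce
      beta_reduce at hsβ
      rw [dif_pos hP] at hsβ
      have hcs := Classical.choose_spec hP
      have hcc : Classical.choose hP = ξ := einj _ hcs.1 _ hξ hcs.2
      rw [hcc] at hsβ
      have hni0 : i0 ≤ i := by
        by_contra hlt
        exact hsβ (Set.mem_union_right _ (not_le.1 hlt))
      have hgt : Hfun i0 f ξ e i < f (e ξ) i := by
        by_contra hle
        exact hsβ (Set.mem_union_left _ ⟨hi, not_lt.1 hle⟩)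
      exact lt_of_le_of_lt (Hfun_le i0 f ξ e hηξ hni0) hgt
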